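/- Invariance of Mirror Sinkhorn under marginal regularization: if the objective f is replaced by f^reg(γ) = f(γ) + R_μ(γ1_n) + R_ν(γᵀ1_m), where R_μ and R_ν are differentiable convex functions whose gradients vanish exactly at μ and ν respectively, then the iterates of the Mirror Sinkhorn algorithm (alternating multiplicative gradient step and row/column normalization, initialized at μνᵀ) are identical for f and f^reg. -/

import Mathlib

def rowSum {m n : ℕ} (A : Matrix (Fin m) (Fin n) ℝ) (i : Fin m) : ℝ := ∑ j, A i j

def colSum {m n : ℕ} (A : Matrix (Fin m) (Fin n) ℝ) (j : Fin n) : ℝ := ∑ i, A i j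

/-- One step of the Mirror Sinkhorn algorithm: a multiplicative gradient update followed
by row normalization (for even `t`) or column normalization (for odd `t`). -/
noncomputable def msStep {m n : ℕ} (μ : Fin m → ℝ) (ν : Fin n → ℝ)
    (grad : Matrix (Fin m) (Fin n) ℝ → Matrix (Fin m) (Fin n) ℝ)
    (η : ℕ → ℝ) (t : ℕ) (γ : Matrix (Fin m) (Fin n) ℝ) : Matrix (Fin m) (Fin n) ℝ :=
  let γ' : Matrix (Fin m) (Fin n) ℝ := fun i j => γ i j * Real.exp (-(η t) * grad γ i j)
  if t % 2 = 0 then (fun i j => μ i / rowSum γ' i * γ' i j)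
  else (fun i j => γ' i j * (ν j / colSum γ' j))


private lemma cancel_aux (a S x k : ℝ) (hk : k ≠ 0) :
    a / (S * k) * (x * k) = a / S * x := by
  rcases eq_or_ne S 0 with h | h
  · simp [h]
  · field_simp

private lemma cancel_aux2 (a S x k : ℝ) (hk : k ≠ 0) :
    a / (S * k) * (k * x) = x * (a / S) := by
  rw [mul_comm k x, cancel_aux a S x k hk, mul_comm]

/-- Invariance of Mirror Sinkhorn under marginal regularization: replacing the objective
`f` by `f^reg(γ) = f(γ) + R_μ(γ1_n) + R_ν(γᵀ1_m)`, where `R_μ, R_ν` are nonnegative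
differentiable convex functions on the simplex whose gradients vanish exactly at `μ`
(resp. `ν`), does not change the iterates of the algorithm started at `μνᵀ`. -/
theorem mirror_sinkhorn_regularization_invariance {m n : ℕ}
    (μ : Fin m → ℝ) (ν : Fin n → ℝ)
    (hμ0 : ∀ i, 0 < μ i) (hμ1 : ∑ i, μ i = 1)
    (hν0 : ∀ j, 0 < ν j) (hν1 : ∑ j, ν j = 1)
    (Rμ : (Fin m → ℝ) → ℝ) (Rν : (Fin n → ℝ) → ℝ)
    (gradRμ : (Fin m → ℝ) → (Fin m → ℝ)) (gradRν : (Fin n → ℝ) → (Fin n → ℝ))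
    (hRμconv : ConvexOn ℝ {x : Fin m → ℝ | (∀ i, 0 ≤ x i) ∧ ∑ i, x i = 1} Rμ)
    (hRνconv : ConvexOn ℝ {y : Fin n → ℝ | (∀ j, 0 ≤ y j) ∧ ∑ j, y j = 1} Rν)
    (hRμnn : ∀ x, (∀ i, 0 ≤ x i) ∧ (∑ i, x i = 1) → 0 ≤ Rμ x)
    (hRνnn : ∀ y, (∀ j, 0 ≤ y j) ∧ (∑ j, y j = 1) → 0 ≤ Rν y)
    (hRμgrad : ∀ x, HasFDerivAt Rμ (∑ i, gradRμ x i • ContinuousLinearMap.proj (R := ℝ) (φ := fun _ : Fin m => ℝ) i) x)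
    (hRνgrad : ∀ y, HasFDerivAt Rν (∑ j, gradRν y j • ContinuousLinearMap.proj (R := ℝ) (φ := fun _ : Fin n => ℝ) j) y)
    (hμiff : ∀ x, (∀ i, 0 ≤ x i) ∧ (∑ i, x i = 1) → (gradRμ x = 0 ↔ x = μ))
    (hνiff : ∀ y, (∀ j, 0 ≤ y j) ∧ (∑ j, y j = 1) → (gradRν y = 0 ↔ y = ν))
    (gradf : Matrix (Fin m) (Fin n) ℝ → Matrix (Fin m) (Fin n) ℝ)
    (η : ℕ → ℝ)
    (γ γreg : ℕ → Matrix (Fin m) (Fin n) ℝ)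
    (h0 : γ 0 = fun i j => μ i * ν j)
    (h0' : γreg 0 = fun i j => μ i * ν j)
    (hrec : ∀ t, γ (t + 1) = msStep μ ν gradf η t (γ t))
    (hrec' : ∀ t, γreg (t + 1) = msStep μ ν
      (fun A => fun i j => gradf A i j + gradRμ (rowSum A) i + gradRν (colSum A) j)
      η t (γreg t)) :
    ∀ t, γreg t = γ t := by
  -- marginals positive and summing to 1 force nonemptiness
  have hmpos : 0 < m := by
    rcases Nat.eq_zero_or_pos m with h | h
    · subst h; simp at hμ1
    · exact h
  have hnpos : 0 < n := by
    rcases Nat.eq_zero_or_pos n with h | h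
    · subst h; simp at hν1
    · exact h
  haveI : Nonempty (Fin m) := ⟨⟨0, hmpos⟩⟩
  haveI : Nonempty (Fin n) := ⟨⟨0, hnpos⟩⟩
  have hgm : gradRμ μ = 0 := (hμiff μ ⟨fun i => (hμ0 i).le, hμ1⟩).mpr rfl
  have hgn : gradRν ν = 0 := (hνiff ν ⟨fun j => (hν0 j).le, hν1⟩).mpr rfl
  suffices H : ∀ t, γreg t = γ t ∧ (∀ i j, 0 < γ t i j) ∧
      (t % 2 = 0 → colSum (γ t) = ν) ∧ (t % 2 = 1 → rowSum (γ t) = μ) from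
    fun t => (H t).1
  intro t
  induction t with
  | zero =>
    refine ⟨h0'.trans h0.symm, ?_, ?_, by simp⟩
    · intro i j; rw [h0]; exact mul_pos (hμ0 i) (hν0 j)
    · intro _
      funext j
      simp only [colSum, h0, ← Finset.sum_mul, hμ1, one_mul]
  | succ t ih =>
    obtain ⟨hEq, hPos, hCol, hRow⟩ := ih
    rcases Nat.mod_two_eq_zero_or_one t with ht | ht
    · -- even step: row normalization
      have hcol := hCol ht
      have hd : ∀ j, gradRν (colSum (γ t)) j = 0 := by
        intro j; rw [hcol, hgn]; rfl
      have hγrec : γ (t + 1) = fun i j =>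
          μ i / rowSum (fun i j => γ t i j * Real.exp (-(η t) * gradf (γ t) i j)) i *
            (γ t i j * Real.exp (-(η t) * gradf (γ t) i j)) := by
        rw [hrec]; simp only [msStep]; exact if_pos ht
      have hSpos : ∀ i, 0 <
          rowSum (fun i j => γ t i j * Real.exp (-(η t) * gradf (γ t) i j)) i := by
        intro i
        exact Finset.sum_pos (fun j _ => mul_pos (hPos i j) (Real.exp_pos _))
          Finset.univ_nonempty
      refine ⟨?_, ?_, ?_, ?_⟩
      · rw [hrec', hEq, hγrec]
        simp only [msStep]; refine (if_pos ht).trans ?_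
        funext i j
        have hexp : ∀ j', γ t i j' * Real.exp (-(η t) *
            (gradf (γ t) i j' + gradRμ (rowSum (γ t)) i + gradRν (colSum (γ t)) j'))
            = (γ t i j' * Real.exp (-(η t) * gradf (γ t) i j')) *
              Real.exp (-(η t) * gradRμ (rowSum (γ t)) i) := by
          intro j'
          rw [hd j', add_zero, mul_add, Real.exp_add]
          ring
        have hS : rowSum (fun i j => γ t i j * Real.exp (-(η t) *
            (gradf (γ t) i j + gradRμ (rowSum (γ t)) i + gradRν (colSum (γ t)) j))) i
            = rowSum (fun i j => γ t i j * Real.exp (-(η t) * gradf (γ t) i j)) i *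
              Real.exp (-(η t) * gradRμ (rowSum (γ t)) i) := by
          simp only [rowSum, hexp, ← Finset.sum_mul]
        simp only [rowSum] at hS ⊢
        rw [hexp j, hS]
        exact cancel_aux _ _ _ _ (Real.exp_ne_zero _)
      · intro i j
        rw [hγrec]
        exact mul_pos (div_pos (hμ0 i) (hSpos i))
          (mul_pos (hPos i j) (Real.exp_pos _))
      · intro h; omega
      · intro _
        funext i
        rw [hγrec]
        simp only [rowSum, ← Finset.mul_sum]
        exact div_mul_cancel₀ (μ i) (hSpos i).ne'
    · -- odd step: column normalization
      have hrow := hRow ht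
      have hc : ∀ i, gradRμ (rowSum (γ t)) i = 0 := by
        intro i; rw [hrow, hgm]; rfl
      have ht' : ¬ t % 2 = 0 := by omega
      have hγrec : γ (t + 1) = fun i j =>
          (γ t i j * Real.exp (-(η t) * gradf (γ t) i j)) *
            (ν j / colSum (fun i j => γ t i j * Real.exp (-(η t) * gradf (γ t) i j)) j) := by
        rw [hrec]; simp only [msStep]; exact if_neg ht'
      have hSpos : ∀ j, 0 <
          colSum (fun i j => γ t i j * Real.exp (-(η t) * gradf (γ t) i j)) j := by
        intro j
        exact Finset.sum_pos (fun i _ => mul_pos (hPos i j) (Real.exp_pos _))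
          Finset.univ_nonempty
      refine ⟨?_, ?_, ?_, ?_⟩
      · rw [hrec', hEq, hγrec]
        simp only [msStep]; refine (if_neg ht').trans ?_
        funext i j
        have hexp : ∀ i', γ t i' j * Real.exp (-(η t) *
            (gradf (γ t) i' j + gradRμ (rowSum (γ t)) i' + gradRν (colSum (γ t)) j))
            = (γ t i' j * Real.exp (-(η t) * gradf (γ t) i' j)) *
              Real.exp (-(η t) * gradRν (colSum (γ t)) j) := by
          intro i'
          rw [hc i', add_zero, mul_add, Real.exp_add]
          ring
        have hS : colSum (fun i j => γ t i j * Real.exp (-(η t) *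
            (gradf (γ t) i j + gradRμ (rowSum (γ t)) i + gradRν (colSum (γ t)) j))) j
            = colSum (fun i j => γ t i j * Real.exp (-(η t) * gradf (γ t) i j)) j *
              Real.exp (-(η t) * gradRν (colSum (γ t)) j) := by
          simp only [colSum, hexp, ← Finset.sum_mul]
        simp only [colSum] at hS ⊢
        rw [hexp i, hS]
        rw [mul_comm ((γ t i j * Real.exp (-(η t) * gradf (γ t) i j)) *
          Real.exp (-(η t) * gradRν (colSum (γ t)) j)), mul_comm
          (γ t i j * Real.exp (-(η t) * gradf (γ t) i j))
          (Real.exp (-(η t) * gradRν (colSum (γ t)) j))]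
        exact cancel_aux2 _ _ _ _ (Real.exp_ne_zero _)
      · intro i j
        rw [hγrec]
        exact mul_pos (mul_pos (hPos i j) (Real.exp_pos _))
          (div_pos (hν0 j) (hSpos j))
      · intro _
        funext j
        rw [hγrec]
        simp only [colSum, ← Finset.sum_mul]
        rw [mul_comm]
        exact div_mul_cancel₀ (ν j) (hSpos j).ne'
      · intro h; omega
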